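/- Let μ be a Borel probability measure on a compact metric space with a Rokhlin disintegration {μ_x} over a measurable partition, and suppose x ↦ μ_x is weak*-continuous on a compact set K of quotient points. For δ > 0 let Γ_δ(x) be the (finite) set of atoms of μ_x with mass ≥ δ. Then the set Γ(K, δ) = {(x, a) : x ∈ K, a ∈ Γ_δ(x)} is closed. -/
import Mathlib


open MeasureTheory
open scoped ENNReal

theorem atom_graph_closed {Q X : Type*} [MetricSpace Q]
    [MetricSpace X] [CompactSpace X] [MeasurableSpace X] [BorelSpace X]
    (μc : Q → Measure X) [∀ q, IsProbabilityMeasure (μc q)]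
    (K : Set Q) (hK : IsCompact K)
    (hcont : ∀ g : X → ℝ, Continuous g →
      ContinuousOn (fun q => ∫ y, g y ∂(μc q)) K)
    (δ : ℝ≥0∞) (hδ : 0 < δ) :
    IsClosed {p : Q × X | p.1 ∈ K ∧ δ ≤ μc p.1 {p.2}} := by
  apply IsSeqClosed.isClosed
  intro f p hf hfp
  -- split the convergence
  have hq : Filter.Tendsto (fun n => (f n).1) Filter.atTop (nhds p.1) :=
    (continuous_fst.tendsto p).comp hfp
  have ha : Filter.Tendsto (fun n => (f n).2) Filter.atTop (nhds p.2) :=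
    (continuous_snd.tendsto p).comp hfp
  have hpK : p.1 ∈ K := hK.isClosed.mem_of_tendsto hq
    (Filter.Eventually.of_forall fun n => (hf n).1)
  refine ⟨hpK, ?_⟩
  -- δ is at most 1 (else trivial contradiction from n = 0)
  have hδ1 : δ ≤ 1 := by
    have := (hf 0).2
    calc δ ≤ μc (f 0).1 {(f 0).2} := this
      _ ≤ 1 := prob_le_one
  have hδtop : δ ≠ ∞ := ne_top_of_le_ne_top ENNReal.one_ne_top hδ1
  -- key step: for every ε > 0, δ ≤ μc p.1 (closedBall p.2 ε)
  have key : ∀ ε : ℝ, 0 < ε → δ ≤ μc p.1 (Metric.closedBall p.2 ε) := by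
    intro ε hε
    set g : X → ℝ := fun x => max (1 - dist x p.2 / ε) 0 with hg_def
    have hg_cont : Continuous g := by
      apply Continuous.max _ continuous_const
      continuity
    have hg_nonneg : ∀ x, 0 ≤ g x := fun x => le_max_right _ _
    have hg_le_one : ∀ x, g x ≤ 1 := by
      intro x
      apply max_le _ zero_le_one
      have : 0 ≤ dist x p.2 / ε := div_nonneg dist_nonneg hε.le
      linarith
    have hg_int : ∀ q : Q, Integrable g (μc q) := fun q =>
      hg_cont.integrable_of_hasCompactSupport (HasCompactSupport.of_compactSpace g)
    -- ∫ g dμ_{q_n} ≥ g(a_n) * δ.toReal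
    have hlow : ∀ n, g (f n).2 * δ.toReal ≤ ∫ y, g y ∂(μc (f n).1) := by
      intro n
      have h1 : ∫ y in {(f n).2}, g y ∂(μc (f n).1)
          = (μc (f n).1 {(f n).2}).toReal • g (f n).2 := integral_singleton g _
      have h2 : ∫ y in {(f n).2}, g y ∂(μc (f n).1) ≤ ∫ y, g y ∂(μc (f n).1) :=
        setIntegral_le_integral (hg_int _) (Filter.Eventually.of_forall hg_nonneg)
      have h3 : δ.toReal ≤ (μc (f n).1 {(f n).2}).toReal :=
        ENNReal.toReal_mono (measure_ne_top _ _) (hf n).2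
      calc g (f n).2 * δ.toReal ≤ g (f n).2 * (μc (f n).1 {(f n).2}).toReal := by
            exact mul_le_mul_of_nonneg_left h3 (hg_nonneg _)
        _ = (μc (f n).1 {(f n).2}).toReal • g (f n).2 := by rw [smul_eq_mul, mul_comm]
        _ ≤ ∫ y, g y ∂(μc (f n).1) := h1 ▸ h2
    -- ∫ g dμ_{q_n} → ∫ g dμ_q
    have hint_tendsto : Filter.Tendsto (fun n => ∫ y, g y ∂(μc (f n).1)) Filter.atTop
        (nhds (∫ y, g y ∂(μc p.1))) := by
      have hcw : ContinuousWithinAt (fun q => ∫ y, g y ∂(μc q)) K p.1 :=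
        (hcont g hg_cont) p.1 hpK
      exact hcw.tendsto.comp (tendsto_nhdsWithin_of_tendsto_nhds_of_eventually_within _ hq
        (Filter.Eventually.of_forall fun n => (hf n).1))
    -- g(a_n) * δ.toReal → δ.toReal
    have hga : Filter.Tendsto (fun n => g (f n).2 * δ.toReal) Filter.atTop
        (nhds (g p.2 * δ.toReal)) :=
      ((hg_cont.tendsto p.2).comp ha).mul tendsto_const_nhds
    have hgp2 : g p.2 = 1 := by simp [hg_def]
    have hlim : δ.toReal ≤ ∫ y, g y ∂(μc p.1) := by
      have := le_of_tendsto_of_tendsto hga hint_tendsto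
        (Filter.Eventually.of_forall hlow)
      rwa [hgp2, one_mul] at this
    -- ∫ g dμ_q ≤ (μ (closedBall p.2 ε)).toReal
    have hup : ∫ y, g y ∂(μc p.1) ≤ (μc p.1 (Metric.closedBall p.2 ε)).toReal := by
      have hind : ∀ y, g y ≤ (Metric.closedBall p.2 ε).indicator (fun _ => (1:ℝ)) y := by
        intro y
        by_cases hy : y ∈ Metric.closedBall p.2 ε
        · rw [Set.indicator_of_mem hy]; exact hg_le_one y
        · rw [Set.indicator_of_notMem hy]
          have : ε < dist y p.2 := by
            simpa [Metric.mem_closedBall] using hy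
          apply max_le _ le_rfl
          have : 1 ≤ dist y p.2 / ε := (one_le_div hε).mpr this.le
          linarith
      have hind_int : Integrable ((Metric.closedBall p.2 ε).indicator (fun _ => (1:ℝ)))
          (μc p.1) := by
        apply Integrable.indicator (integrable_const 1) Metric.isClosed_closedBall.measurableSet
      calc ∫ y, g y ∂(μc p.1)
          ≤ ∫ y, (Metric.closedBall p.2 ε).indicator (fun _ => (1:ℝ)) y ∂(μc p.1) :=
            integral_mono (hg_int _) hind_int hind
        _ = (μc p.1 (Metric.closedBall p.2 ε)).toReal • (1:ℝ) :=
            integral_indicator_const 1 Metric.isClosed_closedBall.measurableSet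
        _ = (μc p.1 (Metric.closedBall p.2 ε)).toReal := by rw [smul_eq_mul, mul_one]
    have : δ.toReal ≤ (μc p.1 (Metric.closedBall p.2 ε)).toReal := le_trans hlim hup
    exact (ENNReal.toReal_le_toReal hδtop (measure_ne_top _ _)).mp this
  -- conclude via continuity from above (cthickening)
  have hten : Filter.Tendsto (fun r => μc p.1 (Metric.cthickening r {p.2}))
      (nhds 0) (nhds (μc p.1 {p.2})) :=
    tendsto_measure_cthickening_of_isClosed
      ⟨1, one_pos, measure_ne_top _ _⟩ isClosed_singleton
  have hten' : Filter.Tendsto (fun r => μc p.1 (Metric.cthickening r {p.2}))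
      (nhdsWithin 0 (Set.Ioi (0:ℝ))) (nhds (μc p.1 {p.2})) :=
    hten.mono_left nhdsWithin_le_nhds
  refine ge_of_tendsto hten' ?_
  filter_upwards [self_mem_nhdsWithin] with r hr
  rw [Metric.cthickening_singleton _ (le_of_lt hr)]
  exact key r hr
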